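/- The lower bound 1/4 for three qubits is sharp: taking the unit vectors ψ₁ = (1, 0), ψ₂ = (cos(2π/3), sin(2π/3)), ψ₃ = (cos(π/3), sin(π/3)) in ℂ², the product state ψ with factors ψ₁, ψ₂, ψ₃ satisfies ⟪ψ, P ψ⟫ = 1/4. -/
import Mathlib

theorem three_qubit_bound_is_sharp
    (ψ₁ ψ₂ ψ₃ : Fin 2 → ℂ)
    (hψ₁ : ψ₁ = ![1, 0])
    (hψ₂ : ψ₂ = ![((Real.cos (2 * Real.pi / 3) : ℝ) : ℂ), ((Real.sin (2 * Real.pi / 3) : ℝ) : ℂ)])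
    (hψ₃ : ψ₃ = ![((Real.cos (Real.pi / 3) : ℝ) : ℂ), ((Real.sin (Real.pi / 3) : ℝ) : ℂ)])
    (ψ : (Fin 3 → Fin 2) → ℂ) (hψ : ∀ j, ψ j = ψ₁ (j 0) * ψ₂ (j 1) * ψ₃ (j 2))
    (Pψ : (Fin 3 → Fin 2) → ℂ)
    (hPψ : ∀ j, Pψ j = ((1 / (Nat.factorial 3 : ℝ) : ℝ) : ℂ) *
      ∑ σ : Equiv.Perm (Fin 3), ψ (j ∘ σ)) :
    (∑ j, (starRingEnd ℂ) (ψ j) * Pψ j) = (1 / 4 : ℂ) := by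
  have e23 : 2 * Real.pi / 3 = Real.pi - Real.pi / 3 := by ring
  have hc2 : Real.cos (2 * Real.pi / 3) = -(1/2) := by
    rw [e23, Real.cos_pi_sub, Real.cos_pi_div_three]
  have hs2 : Real.sin (2 * Real.pi / 3) = Real.sqrt 3 / 2 := by
    rw [e23, Real.sin_pi_sub, Real.sin_pi_div_three]
  have huniv : (Finset.univ : Finset (Equiv.Perm (Fin 3))) =
      {1, Equiv.swap 0 1, Equiv.swap 0 2, Equiv.swap 1 2, finRotate 3, (finRotate 3)⁻¹} := by
    decide
  have hj : (Finset.univ : Finset (Fin 3 → Fin 2)) =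
      {![0,0,0], ![0,0,1], ![0,1,0], ![0,1,1], ![1,0,0], ![1,0,1], ![1,1,0], ![1,1,1]} := by
    decide
  have h3 : ((Real.sqrt 3 : ℝ) : ℂ) * ((Real.sqrt 3 : ℝ) : ℂ) = 3 := by
    rw [← Complex.ofReal_mul, Real.mul_self_sqrt (by norm_num)]; norm_num
  have hP2 : ∀ j : Fin 3 → Fin 2, Pψ j = ((1/6 : ℝ) : ℂ) *
      (ψ ![j 0, j 1, j 2] + ψ ![j 1, j 0, j 2] + ψ ![j 2, j 1, j 0] + ψ ![j 0, j 2, j 1]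
        + ψ ![j 1, j 2, j 0] + ψ ![j 2, j 0, j 1]) := by
    intro j
    rw [hPψ, huniv, Finset.sum_insert (by decide), Finset.sum_insert (by decide),
      Finset.sum_insert (by decide), Finset.sum_insert (by decide),
      Finset.sum_insert (by decide), Finset.sum_singleton]
    have c1 : j ∘ ⇑(1 : Equiv.Perm (Fin 3)) = ![j 0, j 1, j 2] := by
      funext i; fin_cases i <;> rfl
    have c2 : j ∘ ⇑(Equiv.swap (0:Fin 3) 1) = ![j 1, j 0, j 2] := by
      funext i; fin_cases i <;> simp [Equiv.swap_apply_def]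
    have c3 : j ∘ ⇑(Equiv.swap (0:Fin 3) 2) = ![j 2, j 1, j 0] := by
      funext i; fin_cases i <;> simp [Equiv.swap_apply_def]
    have c4 : j ∘ ⇑(Equiv.swap (1:Fin 3) 2) = ![j 0, j 2, j 1] := by
      funext i; fin_cases i <;> simp [Equiv.swap_apply_def]
    have c5 : j ∘ ⇑(finRotate 3) = ![j 1, j 2, j 0] := by
      funext i; fin_cases i <;> rfl
    have c6 : j ∘ ⇑(finRotate 3)⁻¹ = ![j 2, j 0, j 1] := by
      funext i; fin_cases i <;> rfl
    rw [c1, c2, c3, c4, c5, c6]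
    norm_num [Nat.factorial]
    ring
  rw [hj, Finset.sum_insert (by decide), Finset.sum_insert (by decide),
    Finset.sum_insert (by decide), Finset.sum_insert (by decide),
    Finset.sum_insert (by decide), Finset.sum_insert (by decide),
    Finset.sum_insert (by decide), Finset.sum_singleton]
  simp only [hP2, hψ, hψ₁, hψ₂, hψ₃, hc2, hs2, Real.cos_pi_div_three, Real.sin_pi_div_three,
    Matrix.cons_val_zero, Matrix.cons_val_one, Matrix.head_cons, Matrix.cons_val_two,
    Matrix.tail_cons, map_mul, map_one, Complex.conj_ofReal]
  push_cast
  ring_nf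
  linear_combination (((Real.sqrt 3 : ℝ) : ℂ) * ((Real.sqrt 3 : ℝ) : ℂ) / 48 + 1/16) * h3
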